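/- Let U be a 2-cuttable unrooted binary phylogenetic network on X, and let e and e' be two distinct cut-edges of U. Then the X-splits induced by e and e' are distinct. -/

import Mathlib

/-- A graph with an explicit vertex set inside an ambient type `V`. -/
structure Net (V : Type) where
  verts : Set V
  graph : SimpleGraph V
  support : ∀ ⦃a b : V⦄, graph.Adj a b → a ∈ verts ∧ b ∈ verts

namespace Net

variable {V : Type}

/-- The degree of a vertex. -/
noncomputable def deg (N : Net V) (v : V) : ℕ := (N.graph.neighborSet v).ncard

/-- `N` is connected (as a graph on its vertex set `N.verts`). -/
def ConnectedOn (N : Net V) : Prop :=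
  N.verts.Nonempty ∧ ∀ a ∈ N.verts, ∀ b ∈ N.verts, N.graph.Reachable a b

/-- The set of leaves (degree-1 vertices). -/
def leaves (N : Net V) : Set V := {v | v ∈ N.verts ∧ N.deg v = 1}

/-- `N` is an unrooted binary phylogenetic network on the (label) set `X`:
it is simple (automatic for `SimpleGraph`), connected, every vertex has degree 1 or 3,
and the degree-1 vertices are exactly the elements of `X` (we identify each leaf with
its label). -/
def IsUBPN (N : Net V) (X : Set V) : Prop :=
  N.ConnectedOn ∧ (∀ v ∈ N.verts, N.deg v = 1 ∨ N.deg v = 3) ∧ N.leaves = X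

/-- Deleting a set of edges. -/
def deleteEdges (N : Net V) (D : Set (Sym2 V)) : Net V where
  verts := N.verts
  graph := N.graph.deleteEdges D
  support := fun _ _ h => N.support ((SimpleGraph.deleteEdges_adj.mp h).1)

/-- A cut-edge: an edge whose deletion disconnects the network. -/
def IsCutEdge (N : Net V) (e : Sym2 V) : Prop :=
  e ∈ N.graph.edgeSet ∧ ¬ (N.deleteEdges {e}).ConnectedOn

/-- `N` is `q`-cuttable: every cycle contains a path of at least `q` vertices
each of which is incident to a cut-edge. -/
def QCuttable (N : Net V) (q : ℕ) : Prop :=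
  ∀ ⦃r : V⦄ (C : N.graph.Walk r r), C.IsCycle →
    ∃ (x y : V) (P : N.graph.Walk x y), P.IsPath ∧ q ≤ P.support.length ∧
      (∀ v ∈ P.support, v ∈ C.support) ∧ (∀ e ∈ P.edges, e ∈ C.edges) ∧
      ∀ v ∈ P.support, ∃ e, N.IsCutEdge e ∧ v ∈ e

end Net

namespace Net

variable {V : Type}

/-- The edge `e` of `N` induces the `X`-split `X₁ | X₂`: `(X₁, X₂)` is a partition of `X`
into two nonempty parts and every path in `N` between a leaf in `X₁` and a leaf in `X₂`
passes through `e`. -/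
def InducesSplit (N : Net V) (X : Set V) (e : Sym2 V) (X₁ X₂ : Set V) : Prop :=
  X₁.Nonempty ∧ X₂.Nonempty ∧ X₁ ∩ X₂ = ∅ ∧ X₁ ∪ X₂ = X ∧
  ∀ x ∈ X₁, ∀ y ∈ X₂, ∀ P : N.graph.Walk x y, P.IsPath → e ∈ P.edges

end Net

open Net

section StatementNineAux

variable {V : Type}

open SimpleGraph

/-- weak trim: from any walk, in the edge-deleted graph we reach the target or a
near endpoint of a deleted edge. -/
lemma trim_weak {G : SimpleGraph V} {D : Set (Sym2 V)} :
    ∀ {s t : V} (_ : G.Walk s t), (G.deleteEdges D).Reachable s t ∨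
      ∃ u v, s(u, v) ∈ D ∧ G.Adj u v ∧ (G.deleteEdges D).Reachable s u := by
  intro s t p
  induction p with
  | nil => exact Or.inl (Reachable.refl _)
  | @cons a b c h p ih =>
    by_cases hD : s(a, b) ∈ D
    · exact Or.inr ⟨a, b, hD, h, Reachable.refl _⟩
    · have hadj : (G.deleteEdges D).Adj a b := by
        rw [SimpleGraph.deleteEdges_adj]; exact ⟨h, hD⟩
      rcases ih with h1 | ⟨u, v, h2, h3, h4⟩
      · exact Or.inl (hadj.reachable.trans h1)
      · exact Or.inr ⟨u, v, h2, h3, hadj.reachable.trans h4⟩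

/-- stronger trim for walks with nodup edges, keeping the remaining walk. -/
lemma trim_strong {G : SimpleGraph V} {D : Set (Sym2 V)} :
    ∀ {s t : V} (p : G.Walk s t), p.edges.Nodup →
      (G.deleteEdges D).Reachable s t ∨
      ∃ (u v : V) (q : G.Walk v t), G.Adj u v ∧ s(u, v) ∈ D ∧ s(u,v) ∈ p.edges ∧
        (G.deleteEdges D).Reachable s u ∧ (∀ d ∈ q.edges, d ∈ p.edges) ∧
        s(u, v) ∉ q.edges ∧ q.edges.Nodup := by
  intro s t p hnd
  induction p with
  | nil => exact Or.inl (Reachable.refl _)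
  | @cons a b c h p ih =>
    rw [SimpleGraph.Walk.edges_cons, List.nodup_cons] at hnd
    by_cases hD : s(a, b) ∈ D
    · refine Or.inr ⟨a, b, p, h, hD, by simp, Reachable.refl _, ?_, hnd.1, hnd.2⟩
      intro d hd; simp [hd]
    · have hadj : (G.deleteEdges D).Adj a b := by
        rw [SimpleGraph.deleteEdges_adj]; exact ⟨h, hD⟩
      rcases ih hnd.2 with h1 | ⟨u, v, q, h2, h3, h4, h5, h6, h7, h8⟩
      · exact Or.inl (hadj.reachable.trans h1)
      · exact Or.inr ⟨u, v, q, h2, h3, by simp [h4], hadj.reachable.trans h5,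
          fun d hd => by simp [h6 d hd], h7, h8⟩

/-- if all deleted edges have reachable endpoints (in the deleted graph), reachability
is preserved. -/
lemma reach_delete_of_endpoints {G : SimpleGraph V} {D : Set (Sym2 V)}
    (hD : ∀ x y : V, s(x, y) ∈ D → G.Adj x y → (G.deleteEdges D).Reachable x y) :
    ∀ {a b : V}, G.Reachable a b → (G.deleteEdges D).Reachable a b := by
  intro a b hab
  obtain ⟨p⟩ := hab
  induction p with
  | nil => exact Reachable.refl _
  | @cons a b c h p ih =>
    by_cases hmem : s(a, b) ∈ D
    · exact (hD a b hmem h).trans ih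
    · exact (SimpleGraph.deleteEdges_adj.mpr ⟨h, hmem⟩).reachable.trans ih

/-- monotonicity of classes under extra deletions whose endpoints are not reachable. -/
lemma reach_delete_mono {G : SimpleGraph V} {D₁ D₂ : Set (Sym2 V)} (_hsub : D₁ ⊆ D₂)
    {t : V} (h : ∀ d ∈ D₂, d ∉ D₁ → ∀ x ∈ d, ¬ (G.deleteEdges D₂).Reachable t x) :
    ∀ {z : V}, (G.deleteEdges D₁).Reachable t z → (G.deleteEdges D₂).Reachable t z := by
  suffices H : ∀ {x z : V}, (p : (G.deleteEdges D₁).Walk x z) →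
      (G.deleteEdges D₂).Reachable t x → (G.deleteEdges D₂).Reachable t z by
    intro z h1; obtain ⟨p⟩ := h1; exact H p (Reachable.refl _)
  intro x z p
  induction p with
  | nil => exact id
  | @cons a b c hab p ih =>
    intro hta
    rw [SimpleGraph.deleteEdges_adj] at hab
    by_cases hmem : s(a, b) ∈ D₂
    · exact absurd hta (h _ hmem hab.2 a (Sym2.mem_mk_left a b))
    · exact ih (hta.trans (SimpleGraph.deleteEdges_adj.mpr ⟨hab.1, hmem⟩).reachable)


variable {V : Type}

open SimpleGraph

lemma ncard_neighborSet_eq_degree {W : Type} [Fintype W] (H : SimpleGraph W)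
    [DecidableRel H.Adj] (w : W) : (H.neighborSet w).ncard = H.degree w := by
  rw [← Nat.card_coe_set_eq, Nat.card_eq_fintype_card,
    SimpleGraph.card_neighborSet_eq_degree]

lemma reach_induce_of_walk {G : SimpleGraph V} {K : Set V}
    (hcl : ∀ z ∈ K, ∀ w, G.Adj z w → w ∈ K) :
    ∀ {a b : V} (_ : G.Walk a b) (ha : a ∈ K),
      ∃ hb : b ∈ K, (G.induce K).Reachable ⟨a, ha⟩ ⟨b, hb⟩ := by
  intro a b p
  induction p with
  | nil => exact fun ha => ⟨ha, Reachable.refl _⟩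
  | @cons a c b h p ih =>
    intro ha
    have hc : c ∈ K := hcl a ha c h
    obtain ⟨hb, hr⟩ := ih hc
    have hadj : (G.induce K).Adj ⟨a, ha⟩ ⟨c, hc⟩ := h
    exact ⟨hb, hadj.reachable.trans hr⟩

/-- In a finite graph, a "closed, connected" set with enough edges contains a cycle. -/
lemma exists_cycle_of_degree (G : SimpleGraph V) [Fintype V] (K : Set V)
    (hne : K.Nonempty)
    (hcl : ∀ z ∈ K, ∀ w, G.Adj z w → w ∈ K)
    (hconn : ∀ z ∈ K, ∀ w ∈ K, G.Reachable z w)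
    (hdeg : 2 * (K.ncard - 1) < ∑ z ∈ K.toFinite.toFinset, (G.neighborSet z).ncard) :
    ∃ (r : V) (C : G.Walk r r), C.IsCycle ∧ ∀ v ∈ C.support, v ∈ K := by
  classical
  haveI : Fintype ↥K := (Set.toFinite K).fintype
  set H : SimpleGraph ↥K := G.induce K with hH
  haveI : DecidableRel H.Adj := Classical.decRel _
  have hdegeq : ∀ w : ↥K, H.degree w = (G.neighborSet ↑w).ncard := by
    intro w
    rw [← ncard_neighborSet_eq_degree]
    have himg : Subtype.val '' (H.neighborSet w) = G.neighborSet ↑w := by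
      ext x
      constructor
      · rintro ⟨y, hy, rfl⟩; exact hy
      · intro hx
        exact ⟨⟨x, hcl ↑w w.2 x hx⟩, hx, rfl⟩
    rw [← himg, Set.ncard_image_of_injective _ Subtype.val_injective]
  have hsum : ∑ z ∈ K.toFinite.toFinset, (G.neighborSet z).ncard
      = ∑ w : ↥K, H.degree w := by
    rw [Finset.sum_subtype (K.toFinite.toFinset)
      (fun x => Set.Finite.mem_toFinset _) (fun z => (G.neighborSet z).ncard)]
    exact Finset.sum_congr rfl fun w _ => (hdegeq w).symm
  have hcardK : Fintype.card ↥K = K.ncard := by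
    rw [← Nat.card_coe_set_eq, Nat.card_eq_fintype_card]
  by_cases hac : H.IsAcyclic
  · -- tree: contradiction with edge count
    have hconn' : H.Connected := by
      haveI : Nonempty ↥K := ⟨⟨hne.choose, hne.choose_spec⟩⟩
      refine ⟨fun a b => ?_⟩
      obtain ⟨p⟩ := hconn ↑a a.2 ↑b b.2
      obtain ⟨hb, hr⟩ := reach_induce_of_walk hcl p a.2
      exact hr
    have hT : H.IsTree := ⟨hconn', hac⟩
    have hcard := hT.card_edgeFinset
    have hds := H.sum_degrees_eq_twice_card_edges
    rw [hsum, hds] at hdeg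
    rw [hcardK] at hcard
    omega
  · have hex : ¬ ∀ ⦃w : ↥K⦄ (c : H.Walk w w), ¬c.IsCycle := hac
    push_neg at hex
    obtain ⟨r₀, C₀, hC₀⟩ := hex
    have hinj : Function.Injective ⇑(SimpleGraph.Embedding.induce K (G := G)).toHom :=
      Subtype.val_injective
    refine ⟨↑r₀, C₀.map (SimpleGraph.Embedding.induce K).toHom, hC₀.map hinj, ?_⟩
    intro v hv
    have hv : v ∈ (C₀.map (SimpleGraph.Embedding.induce K (G := G)).toHom).support := hv
    rw [SimpleGraph.Walk.support_map] at hv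
    obtain ⟨w, _, rfl⟩ := List.mem_map.mp hv
    exact w.2


variable {V : Type}

open SimpleGraph

lemma mapLe_support {G G' : SimpleGraph V} (h : G ≤ G') {u v : V} (p : G.Walk u v) :
    (p.mapLe h).support = p.support := by
  induction p with
  | nil => rfl
  | cons h p ih => simp [SimpleGraph.Walk.mapLe, SimpleGraph.Walk.support_map] at ih ⊢

lemma mapLe_edges {G G' : SimpleGraph V} (h : G ≤ G') {u v : V} (p : G.Walk u v) :
    (p.mapLe h).edges = p.edges := by
  induction p with
  | nil => rfl
  | cons h p ih => simp [SimpleGraph.Walk.mapLe, SimpleGraph.Walk.edges_map] at ih ⊢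

namespace Net

/-- membership in verts from reachability to a vertex in verts -/
lemma mem_verts_of_reach {N : Net V} {G' : SimpleGraph V} (hle : G' ≤ N.graph)
    {z b : V} (h : G'.Reachable z b) (hb : b ∈ N.verts) : z ∈ N.verts := by
  obtain ⟨p⟩ := h
  cases p with
  | nil => exact hb
  | cons h p => exact (N.support (hle h)).1

/-- a cut edge separates its endpoints -/
lemma cut_not_reach {N : Net V} (hconn : N.ConnectedOn) {f : Sym2 V}
    (hcut : N.IsCutEdge f) {x y : V} (hf : f = s(x, y)) :
    ¬ (N.graph.deleteEdges {f}).Reachable x y := by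
  intro hreach
  apply hcut.2
  refine ⟨hconn.1, fun a ha b hb => ?_⟩
  have : (N.graph.deleteEdges {f}).Reachable a b := by
    apply reach_delete_of_endpoints (D := {f}) ?_ (hconn.2 a ha b hb)
    intro p q hpq _
    rw [Set.mem_singleton_iff, hf, Sym2.eq_iff] at hpq
    rcases hpq with ⟨rfl, rfl⟩ | ⟨rfl, rfl⟩
    · exact hreach
    · exact hreach.symm
  exact this

end Net


variable {V : Type}

open SimpleGraph

open scoped Classical in
lemma partner_ncard_le [Fintype V] (z : V) (e : Sym2 V) :
    ({w : V | s(z, w) = e} : Set V).ncard ≤ if z ∈ e then 1 else 0 := by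
  by_cases hz : z ∈ e
  · rw [if_pos hz]
    rw [Set.ncard_le_one (Set.toFinite _)]
    intro a ha b hb
    simp only [Set.mem_setOf_eq] at ha hb
    rw [← hb] at ha
    exact Sym2.congr_right.mp ha
  · rw [if_neg hz]
    have : ({w : V | s(z, w) = e} : Set V) = ∅ := by
      ext w; simp only [Set.mem_setOf_eq, Set.mem_empty_iff_false, iff_false]
      intro h; exact hz (h ▸ Sym2.mem_mk_left z w)
    rw [this, Set.ncard_empty]

open scoped Classical in
lemma deg_bound_pair (G : SimpleGraph V) [Fintype V] (z : V) (e₁ e₂ : Sym2 V)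
    (h3 : (G.neighborSet z).ncard = 3) :
    3 ≤ ((G.deleteEdges {e₁, e₂}).neighborSet z).ncard +
      ((if z ∈ e₁ then 1 else 0) + (if z ∈ e₂ then 1 else 0)) := by
  have hsub : G.neighborSet z ⊆ (G.deleteEdges {e₁, e₂}).neighborSet z ∪
      ({w : V | s(z, w) = e₁} ∪ {w : V | s(z, w) = e₂}) := by
    intro w hw
    by_cases hD : s(z, w) ∈ ({e₁, e₂} : Set (Sym2 V))
    · rcases hD with h | h
      · exact Or.inr (Or.inl h)
      · exact Or.inr (Or.inr h)
    · exact Or.inl (by rw [SimpleGraph.mem_neighborSet, SimpleGraph.deleteEdges_adj]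
                       exact ⟨hw, hD⟩)
  calc 3 = (G.neighborSet z).ncard := h3.symm
    _ ≤ _ := Set.ncard_le_ncard hsub (Set.toFinite _)
    _ ≤ ((G.deleteEdges {e₁, e₂}).neighborSet z).ncard +
        (({w : V | s(z, w) = e₁} : Set V).ncard + ({w : V | s(z, w) = e₂} : Set V).ncard) := by
        refine le_trans (Set.ncard_union_le _ _) ?_
        exact add_le_add le_rfl (Set.ncard_union_le _ _)
    _ ≤ _ := add_le_add le_rfl (add_le_add (partner_ncard_le z e₁) (partner_ncard_le z e₂))

open scoped Classical in
lemma deg_bound_triple (G : SimpleGraph V) [Fintype V] (z : V) (e₁ e₂ g : Sym2 V)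
    (h3 : (G.neighborSet z).ncard = 3) :
    3 ≤ ((G.deleteEdges {e₁, e₂, g}).neighborSet z).ncard +
      ((if z ∈ e₁ then 1 else 0) + ((if z ∈ e₂ then 1 else 0) + (if z ∈ g then 1 else 0))) := by
  have hsub : G.neighborSet z ⊆ (G.deleteEdges {e₁, e₂, g}).neighborSet z ∪
      ({w : V | s(z, w) = e₁} ∪ ({w : V | s(z, w) = e₂} ∪ {w : V | s(z, w) = g})) := by
    intro w hw
    by_cases hD : s(z, w) ∈ ({e₁, e₂, g} : Set (Sym2 V))
    · rcases hD with h | h | h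
      · exact Or.inr (Or.inl h)
      · exact Or.inr (Or.inr (Or.inl h))
      · exact Or.inr (Or.inr (Or.inr h))
    · exact Or.inl (by rw [SimpleGraph.mem_neighborSet, SimpleGraph.deleteEdges_adj]
                       exact ⟨hw, hD⟩)
  calc 3 = (G.neighborSet z).ncard := h3.symm
    _ ≤ _ := Set.ncard_le_ncard hsub (Set.toFinite _)
    _ ≤ ((G.deleteEdges {e₁, e₂, g}).neighborSet z).ncard +
        (({w : V | s(z, w) = e₁} : Set V).ncard +
          (({w : V | s(z, w) = e₂} : Set V).ncard + ({w : V | s(z, w) = g} : Set V).ncard)) := by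
        refine le_trans (Set.ncard_union_le _ _) ?_
        refine add_le_add le_rfl (le_trans (Set.ncard_union_le _ _) ?_)
        exact add_le_add le_rfl (Set.ncard_union_le _ _)
    _ ≤ _ := add_le_add le_rfl (add_le_add (partner_ncard_le z e₁)
        (add_le_add (partner_ncard_le z e₂) (partner_ncard_le z g)))

open scoped Classical in
lemma sum_ite_mem_le_one (F : Finset V) (e : Sym2 V)
    (huniq : ∀ x ∈ F, x ∈ e → ∀ y ∈ F, y ∈ e → x = y) :
    (∑ z ∈ F, if z ∈ e then 1 else 0) ≤ 1 := by
  rw [Finset.sum_boole]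
  norm_cast
  rw [Finset.card_le_one]
  intro a ha b hb
  rw [Finset.mem_filter] at ha hb
  exact huniq a ha.1 ha.2 b hb.1 hb.2

open scoped Classical in
lemma sum_ite_mem_le_two (F : Finset V) (b c : V) :
    (∑ z ∈ F, if z ∈ s(b, c) then 1 else 0) ≤ 2 := by
  rw [Finset.sum_boole]
  norm_cast
  have : F.filter (· ∈ s(b, c)) ⊆ {b, c} := by
    intro a ha
    rw [Finset.mem_filter] at ha
    rcases Sym2.mem_iff.mp ha.2 with rfl | rfl <;> simp
  exact le_trans (Finset.card_le_card this) (Finset.card_insert_le _ _ |>.trans (by simp))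


variable {V : Type}

open SimpleGraph

namespace Net

def MidClass (U : Net V) (e₁ e₂ : Sym2 V) (K : Set V) : Prop :=
  (∃ b₀, b₀ ∈ K ∧ b₀ ∈ U.verts ∧
    ∀ z, z ∈ K ↔ (U.graph.deleteEdges {e₁, e₂}).Reachable z b₀) ∧
  (∀ z ∈ K, z ∉ U.leaves) ∧
  (∀ x ∈ K, x ∈ e₁ → ∀ y ∈ K, y ∈ e₁ → x = y) ∧
  (∀ x ∈ K, x ∈ e₂ → ∀ y ∈ K, y ∈ e₂ → x = y)

lemma cut_from_cycle (U : Net V) (h2 : U.QCuttable 2)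
    (e₁ e₂ : Sym2 V) (K : Set V)
    (hclU : ∀ z ∈ K, ∀ w, U.graph.Adj z w → s(z, w) ≠ e₁ → s(z, w) ≠ e₂ → w ∈ K)
    (hu1 : ∀ x ∈ K, x ∈ e₁ → ∀ y ∈ K, y ∈ e₁ → x = y)
    (hu2 : ∀ x ∈ K, x ∈ e₂ → ∀ y ∈ K, y ∈ e₂ → x = y)
    {r : V} (C : U.graph.Walk r r) (hC : C.IsCycle)
    (hCK : ∀ v ∈ C.support, v ∈ K) (hCD : ∀ d ∈ C.edges, d ≠ e₁ ∧ d ≠ e₂) :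
    (∃ f, U.IsCutEdge f ∧ f ≠ e₁ ∧ f ≠ e₂ ∧ ∀ x ∈ f, x ∈ K) ∨
    (∃ b c, b ∈ K ∧ c ∈ K ∧ b ∈ e₁ ∧ c ∈ e₂ ∧ s(b, c) ∈ C.edges) := by
  obtain ⟨px, py, P, hP, hlen, hsupp, hedges, hcut⟩ := h2 C hC
  cases P with
  | nil => simp at hlen
  | @cons _ v _ hadj q =>
    have hu_supp : px ∈ (SimpleGraph.Walk.cons hadj q).support :=
      SimpleGraph.Walk.start_mem_support _
    have hv_supp : v ∈ (SimpleGraph.Walk.cons hadj q).support := by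
      rw [SimpleGraph.Walk.support_cons]
      exact List.mem_cons_of_mem _ (SimpleGraph.Walk.start_mem_support _)
    have he_uv : s(px, v) ∈ (SimpleGraph.Walk.cons hadj q).edges := by
      rw [SimpleGraph.Walk.edges_cons]; exact List.mem_cons_self
    have huK : px ∈ K := hCK _ (hsupp _ hu_supp)
    have hvK : v ∈ K := hCK _ (hsupp _ hv_supp)
    obtain ⟨fu, hfu, hufu⟩ := hcut px hu_supp
    obtain ⟨fv, hfv, hvfv⟩ := hcut v hv_supp
    have inner : ∀ w f, U.IsCutEdge f → w ∈ f → w ∈ K → ¬ f = e₁ → ¬ f = e₂ →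
        ∃ f, U.IsCutEdge f ∧ f ≠ e₁ ∧ f ≠ e₂ ∧ ∀ x ∈ f, x ∈ K := by
      intro w f hf hwf hwK h1 h2'
      obtain ⟨w', rfl⟩ := Sym2.mem_iff_exists.mp hwf
      have hadj' : U.graph.Adj w w' := (SimpleGraph.mem_edgeSet _).mp hf.1
      have hw'K : w' ∈ K := hclU w hwK w' hadj' h1 h2'
      refine ⟨s(w, w'), hf, h1, h2', fun x hx => ?_⟩
      rcases Sym2.mem_iff.mp hx with rfl | rfl
      · exact hwK
      · exact hw'K
    by_cases hfu1 : fu = e₁ ∨ fu = e₂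
    · by_cases hfv1 : fv = e₁ ∨ fv = e₂
      · have hedge_uv : s(px, v) ∈ C.edges := hedges _ he_uv
        rcases hfu1 with rfl | rfl <;> rcases hfv1 with rfl | rfl
        · exact absurd (hu1 px huK hufu v hvK hvfv) hadj.ne
        · exact Or.inr ⟨px, v, huK, hvK, hufu, hvfv, hedge_uv⟩
        · exact Or.inr ⟨v, px, hvK, huK, hvfv, hufu, by rwa [Sym2.eq_swap]⟩
        · exact absurd (hu2 px huK hufu v hvK hvfv) hadj.ne
      · push_neg at hfv1
        exact Or.inl (inner v fv hfv hvfv hvK hfv1.1 hfv1.2)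
    · push_neg at hfu1
      exact Or.inl (inner px fu hfu hufu huK hfu1.1 hfu1.2)

end Net


variable {V : Type}

open SimpleGraph

namespace Net

lemma mid_subset_verts {U : Net V} {e₁ e₂ : Sym2 V} {K : Set V}
    (hmid : U.MidClass e₁ e₂ K) : ∀ z ∈ K, z ∈ U.verts := by
  obtain ⟨⟨b₀, _, hb₀v, hKdef⟩, _, _, _⟩ := hmid
  exact fun z hz =>
    Net.mem_verts_of_reach (SimpleGraph.deleteEdges_le _) ((hKdef z).mp hz) hb₀v

/-- The recursion step: an inner cut edge inside a mid class yields a smaller mid class. -/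
lemma step5 [Fintype V] (U : Net V) (hconn : U.ConnectedOn)
    (e₁ e₂ : Sym2 V) (K : Set V) (hmid : U.MidClass e₁ e₂ K)
    (f : Sym2 V) (hfcut : U.IsCutEdge f) (hfne1 : f ≠ e₁) (hfne2 : f ≠ e₂)
    (hfK : ∀ x ∈ f, x ∈ K)
    (IH : ∀ m, m < K.ncard → ∀ (e₁' e₂' : Sym2 V) (K' : Set V),
      U.MidClass e₁' e₂' K' → K'.ncard = m → False) : False := by
  have hKverts := Net.mid_subset_verts hmid
  obtain ⟨⟨b₀, hb₀K, hb₀v, hKdef⟩, hleaf, hu1, hu2⟩ := hmid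
  obtain ⟨p, q, hfpq⟩ : ∃ p q, f = s(p, q) := by
    obtain ⟨q, hq⟩ := Sym2.mem_iff_exists.mp (Sym2.out_fst_mem f)
    exact ⟨f.out.1, q, hq⟩
  have hpq_adj : U.graph.Adj p q := (SimpleGraph.mem_edgeSet _).mp (hfpq ▸ hfcut.1)
  have hpK : p ∈ K := hfK p (hfpq ▸ Sym2.mem_mk_left p q)
  have hqK : q ∈ K := hfK q (hfpq ▸ Sym2.mem_mk_right p q)
  have hsep : ¬ (U.graph.deleteEdges {f}).Reachable p q :=
    Net.cut_not_reach hconn hfcut hfpq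
  set D₃ : Set (Sym2 V) := {e₁, e₂, f} with hD₃
  have hfD₃ : f ∈ D₃ := by simp [hD₃]
  have hsub_f : ({f} : Set (Sym2 V)) ⊆ D₃ := by
    intro d hd; rw [Set.mem_singleton_iff] at hd; rw [hd]; exact hfD₃
  have hsub_pair : ({e₁, e₂} : Set (Sym2 V)) ⊆ D₃ := by
    intro d hd; rcases hd with rfl | rfl <;> simp [hD₃]
  have hmono_pair : ∀ z w : V, (U.graph.deleteEdges D₃).Reachable z w →
      (U.graph.deleteEdges {e₁, e₂}).Reachable z w := fun z w h =>
    h.mono (SimpleGraph.deleteEdges_anti hsub_pair)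
  have hmono_f : ∀ z w : V, (U.graph.deleteEdges D₃).Reachable z w →
      (U.graph.deleteEdges {f}).Reachable z w := fun z w h =>
    h.mono (SimpleGraph.deleteEdges_anti hsub_f)
  have hKmem : ∀ z w, (U.graph.deleteEdges D₃).Reachable z w → w ∈ K → z ∈ K := by
    intro z w h hw
    exact (hKdef z).mpr ((hmono_pair z w h).trans ((hKdef w).mp hw))
  have key : ∀ t o : V, f = s(t, o) → t ∈ K → o ∈ K →
      ¬ (U.graph.deleteEdges {f}).Reachable t o →
      (∀ x, x ∈ e₁ → ¬ (U.graph.deleteEdges D₃).Reachable x t) → False := by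
    intro t o hfto htK hoK hsep' he₁t
    set T : Set V := {z | (U.graph.deleteEdges {f, e₂}).Reachable z t} with hT
    have hmono : ∀ z, (U.graph.deleteEdges {f, e₂}).Reachable t z →
        (U.graph.deleteEdges D₃).Reachable t z := by
      apply reach_delete_mono
      · intro d hd; rcases hd with rfl | rfl
        · exact hfD₃
        · simp [hD₃]
      · intro d hd hd1 x hx hreach
        rcases hd with rfl | rfl | rfl
        · exact he₁t x hx hreach.symm
        · exact hd1 (by simp)
        · exact hd1 (by simp)
    have hTD₃ : ∀ z ∈ T, (U.graph.deleteEdges D₃).Reachable t z :=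
      fun z hz => hmono z hz.symm
    have hTK : T ⊆ K := fun z hz => hKmem z t ((hTD₃ z hz).symm) htK
    have hoT : o ∉ T := by
      intro hoT
      exact hsep' (hmono_f t o (hTD₃ o hoT))
    have hmid' : U.MidClass f e₂ T := by
      refine ⟨⟨t, SimpleGraph.Reachable.refl _, hKverts t htK, fun z => Iff.rfl⟩,
        fun z hz => hleaf z (hTK hz), ?_, ?_⟩
      · intro x hxT hxf y hyT hyf
        rw [hfto] at hxf hyf
        rcases Sym2.mem_iff.mp hxf with rfl | rfl
        · rcases Sym2.mem_iff.mp hyf with rfl | rfl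
          · rfl
          · exact absurd hyT hoT
        · exact absurd hxT hoT
      · intro x hxT hxe y hyT hye
        exact hu2 x (hTK hxT) hxe y (hTK hyT) hye
    have hss : T ⊂ K := ⟨hTK, fun hKT => hoT (hKT hoK)⟩
    exact IH T.ncard (Set.ncard_lt_ncard hss (Set.toFinite K)) f e₂ T hmid' rfl
  by_cases hcase : ∀ x, x ∈ e₁ → ¬ (U.graph.deleteEdges D₃).Reachable x p
  · exact key p q hfpq hpK hqK hsep hcase
  · push_neg at hcase
    obtain ⟨x₀, hx₀e, hx₀r⟩ := hcase
    refine key q p (hfpq.trans Sym2.eq_swap) hqK hpK (fun h => hsep h.symm) ?_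
    intro x hxe hreach
    have hxK : x ∈ K := hKmem x q hreach hqK
    have hx₀K : x₀ ∈ K := hKmem x₀ p hx₀r hpK
    have hxx₀ : x = x₀ := hu1 x hxK hxe x₀ hx₀K hx₀e
    exact hsep (hmono_f p q ((hxx₀ ▸ hx₀r).symm.trans hreach))

end Net


variable {V : Type}

open SimpleGraph

namespace Net

open scoped Classical in
lemma no_mid [Fintype V] (U : Net V) (X : Set V) (hU : U.IsUBPN X)
    (h2 : U.QCuttable 2) :
    ∀ (n : ℕ) (e₁ e₂ : Sym2 V) (K : Set V), U.MidClass e₁ e₂ K → K.ncard = n → False := by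
  intro n
  induction n using Nat.strong_induction_on with
  | _ n IH =>
  intro e₁ e₂ K hmid hn
  have hKverts := Net.mid_subset_verts hmid
  have hmid' := hmid
  obtain ⟨⟨b₀, hb₀K, hb₀v, hKdef⟩, hleaf, hu1, hu2⟩ := hmid'
  set Gp := U.graph.deleteEdges {e₁, e₂} with hGp
  have hdeg3 : ∀ z ∈ K, (U.graph.neighborSet z).ncard = 3 := by
    intro z hz
    rcases hU.2.1 z (hKverts z hz) with h1 | h3
    · exact absurd ⟨hKverts z hz, h1⟩ (hleaf z hz)
    · exact h3
  have hclp : ∀ z ∈ K, ∀ w, Gp.Adj z w → w ∈ K := by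
    intro z hz w hadj
    exact (hKdef w).mpr (hadj.symm.reachable.trans ((hKdef z).mp hz))
  have hclU : ∀ z ∈ K, ∀ w, U.graph.Adj z w → s(z, w) ≠ e₁ → s(z, w) ≠ e₂ → w ∈ K := by
    intro z hz w hadj h1 h2'
    exact hclp z hz w (SimpleGraph.deleteEdges_adj.mpr ⟨hadj, by simp [h1, h2']⟩)
  have hconnp : ∀ z ∈ K, ∀ w ∈ K, Gp.Reachable z w := fun z hz w hw =>
    ((hKdef z).mp hz).trans ((hKdef w).mp hw).symm
  have hKne : K.Nonempty := ⟨b₀, hb₀K⟩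
  have hn1 : 1 ≤ K.ncard := (Set.ncard_pos (Set.toFinite K)).mpr hKne
  -- the IH in convenient form
  have IH' : ∀ m, m < K.ncard → ∀ (e₁' e₂' : Sym2 V) (K' : Set V),
      U.MidClass e₁' e₂' K' → K'.ncard = m → False := by
    intro m hm; exact IH m (hn ▸ hm)
  -- round 1: degree sum bound
  have hsum1 : 3 * K.ncard ≤ (∑ z ∈ K.toFinite.toFinset, (Gp.neighborSet z).ncard) + 2 := by
    have hstep : ∀ z ∈ K.toFinite.toFinset,
        3 ≤ (Gp.neighborSet z).ncard + ((if z ∈ e₁ then 1 else 0) + (if z ∈ e₂ then 1 else 0)) :=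
      fun z hz => deg_bound_pair U.graph z e₁ e₂ (hdeg3 z ((Set.Finite.mem_toFinset _).mp hz))
    have h1 : 3 * K.ncard = ∑ _z ∈ K.toFinite.toFinset, 3 := by
      rw [Finset.sum_const, Set.ncard_eq_toFinset_card K (Set.toFinite K)]
      ring
    calc 3 * K.ncard
        = ∑ _z ∈ K.toFinite.toFinset, 3 := h1
      _ ≤ ∑ z ∈ K.toFinite.toFinset, ((Gp.neighborSet z).ncard +
            ((if z ∈ e₁ then 1 else 0) + (if z ∈ e₂ then 1 else 0))) :=
          Finset.sum_le_sum hstep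
      _ = (∑ z ∈ K.toFinite.toFinset, (Gp.neighborSet z).ncard) +
            ((∑ z ∈ K.toFinite.toFinset, if z ∈ e₁ then 1 else 0) +
             (∑ z ∈ K.toFinite.toFinset, if z ∈ e₂ then 1 else 0)) := by
          rw [Finset.sum_add_distrib, Finset.sum_add_distrib]
      _ ≤ _ := by
          have t1 := sum_ite_mem_le_one (K.toFinite.toFinset) e₁
            (fun x hx hxe y hy hye =>
              hu1 x ((Set.Finite.mem_toFinset _).mp hx) hxe y ((Set.Finite.mem_toFinset _).mp hy) hye)
          have t2 := sum_ite_mem_le_one (K.toFinite.toFinset) e₂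
            (fun x hx hxe y hy hye =>
              hu2 x ((Set.Finite.mem_toFinset _).mp hx) hxe y ((Set.Finite.mem_toFinset _).mp hy) hye)
          omega
  have hdegE1 : 2 * (K.ncard - 1) < ∑ z ∈ K.toFinite.toFinset, (Gp.neighborSet z).ncard := by
    omega
  obtain ⟨r, C₁, hC₁, hC₁K⟩ := exists_cycle_of_degree Gp K hKne hclp hconnp hdegE1
  have hle : Gp ≤ U.graph := SimpleGraph.deleteEdges_le _
  have hCc : (C₁.mapLe hle).IsCycle := hC₁.mapLe _
  have hCsupp : ∀ v ∈ (C₁.mapLe hle).support, v ∈ K := by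
    intro v hv; rw [mapLe_support] at hv; exact hC₁K v hv
  have hCD : ∀ d ∈ (C₁.mapLe hle).edges, d ≠ e₁ ∧ d ≠ e₂ := by
    intro d hd; rw [mapLe_edges] at hd
    have hmem := C₁.edges_subset_edgeSet hd
    rw [hGp, SimpleGraph.edgeSet_deleteEdges] at hmem
    have hnd := hmem.2
    constructor
    · intro h; exact hnd (by simp [h])
    · intro h; exact hnd (by simp [h])
  rcases Net.cut_from_cycle U h2 e₁ e₂ K hclU hu1 hu2 (C₁.mapLe hle) hCc hCsupp hCD with
    hinner | ⟨b, c, hbK, hcK, hbe₁, hce₂, hgC⟩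
  · obtain ⟨f, hfcut, hf1, hf2, hfK⟩ := hinner
    exact Net.step5 U hU.1 e₁ e₂ K hmid f hfcut hf1 hf2 hfK IH'
  · -- annoying branch
    have hgE : s(b, c) ∈ U.graph.edgeSet := (C₁.mapLe hle).edges_subset_edgeSet hgC
    have hadj_bc : U.graph.Adj b c := (SimpleGraph.mem_edgeSet _).mp hgE
    have hbc_ne : b ≠ c := hadj_bc.ne
    set g := s(b, c) with hg
    set D₂ : Set (Sym2 V) := {e₁, e₂, g} with hD₂
    set G₂ := U.graph.deleteEdges D₂ with hG₂def
    have hsub_pair₂ : ({e₁, e₂} : Set (Sym2 V)) ⊆ D₂ := by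
      intro d hd; rcases hd with rfl | rfl <;> simp [hD₂]
    have hG₂p : G₂ ≤ Gp := SimpleGraph.deleteEdges_anti hsub_pair₂
    have hGG : Gp.deleteEdges {g} = G₂ := by
      rw [hGp, SimpleGraph.deleteEdges_deleteEdges, hG₂def]
      congr 1
      ext d
      simp only [Set.mem_union, Set.mem_insert_iff, Set.mem_singleton_iff, hD₂]
      tauto
    -- K has at least 3 elements
    have hKn3 : 3 ≤ K.ncard := by
      have hc1 : c ∉ e₁ := fun hce₁ => hbc_ne (hu1 b hbK hbe₁ c hcK hce₁)
      have hnb : 2 ≤ (Gp.neighborSet c).ncard := by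
        have := deg_bound_pair U.graph c e₁ e₂ (hdeg3 c hcK)
        rw [← hGp, if_neg hc1] at this
        by_cases hc2 : c ∈ e₂
        · rw [if_pos hc2] at this; omega
        · rw [if_neg hc2] at this; omega
      obtain ⟨w₁, hw₁, w₂, hw₂, hww⟩ := (Set.one_lt_ncard (Set.toFinite _)).mp hnb
      have hws : ∀ w ∈ Gp.neighborSet c, w ∈ K ∧ w ≠ c := fun w hw =>
        ⟨hclp c hcK w hw, fun h => (h ▸ hw : Gp.Adj c w).ne' (h ▸ rfl)⟩
      obtain ⟨hw₁K, hw₁c⟩ := hws w₁ hw₁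
      obtain ⟨hw₂K, hw₂c⟩ := hws w₂ hw₂
      have hone : ∃ w, w ∈ K ∧ w ≠ c ∧ w ≠ b := by
        by_cases h1 : w₁ = b
        · exact ⟨w₂, hw₂K, hw₂c, fun h => hww (h1 ▸ h ▸ rfl)⟩
        · exact ⟨w₁, hw₁K, hw₁c, h1⟩
      obtain ⟨w, hwK, hwc, hwb⟩ := hone
      have hsub3 : ({b, c, w} : Set V) ⊆ K := by
        intro x hx; rcases hx with rfl | rfl | rfl
        · exact hbK
        · exact hcK
        · exact hwK
      have h3 : ({b, c, w} : Set V).ncard = 3 := by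
        rw [Set.ncard_insert_of_notMem (by simp [hbc_ne, Ne.symm hwb]) (Set.toFinite _),
          Set.ncard_pair (Ne.symm hwc)]
      calc 3 = ({b, c, w} : Set V).ncard := h3.symm
        _ ≤ K.ncard := Set.ncard_le_ncard hsub3 (Set.toFinite K)
    by_cases hα : G₂.Reachable b c
    · -- α: K is still a single class without g; find a cycle avoiding g
      have hreachb : ∀ z ∈ K, G₂.Reachable z b := by
        intro z hz
        obtain ⟨p⟩ := hconnp z hz b hbK
        rcases trim_weak (D := ({g} : Set (Sym2 V))) p with h | ⟨u, v, huv, _, hru⟩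
        · exact hGG ▸ h
        · rw [Set.mem_singleton_iff] at huv
          have humem : u ∈ g := huv ▸ Sym2.mem_mk_left u v
          have hru₂ : G₂.Reachable z u := hGG ▸ hru
          rcases Sym2.mem_iff.mp humem with rfl | rfl
          · exact hru₂
          · exact hru₂.trans hα.symm
      have hconn₂ : ∀ z ∈ K, ∀ w ∈ K, G₂.Reachable z w := fun z hz w hw =>
        (hreachb z hz).trans (hreachb w hw).symm
      have hcl₂ : ∀ z ∈ K, ∀ w, G₂.Adj z w → w ∈ K := fun z hz w ha =>
        hclp z hz w (hG₂p ha)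
      -- degree sum bound for G₂
      have hsum₂ : 3 * K.ncard ≤ (∑ z ∈ K.toFinite.toFinset, (G₂.neighborSet z).ncard) + 4 := by
        have hstep : ∀ z ∈ K.toFinite.toFinset,
            3 ≤ (G₂.neighborSet z).ncard + ((if z ∈ e₁ then 1 else 0) +
              ((if z ∈ e₂ then 1 else 0) + (if z ∈ g then 1 else 0))) :=
          fun z hz => deg_bound_triple U.graph z e₁ e₂ g
            (hdeg3 z ((Set.Finite.mem_toFinset _).mp hz))
        have h1 : 3 * K.ncard = ∑ _z ∈ K.toFinite.toFinset, 3 := by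
          rw [Finset.sum_const, Set.ncard_eq_toFinset_card K (Set.toFinite K)]
          ring
        calc 3 * K.ncard
            = ∑ _z ∈ K.toFinite.toFinset, 3 := h1
          _ ≤ ∑ z ∈ K.toFinite.toFinset, ((G₂.neighborSet z).ncard +
                ((if z ∈ e₁ then 1 else 0) +
                 ((if z ∈ e₂ then 1 else 0) + (if z ∈ g then 1 else 0)))) :=
              Finset.sum_le_sum hstep
          _ = (∑ z ∈ K.toFinite.toFinset, (G₂.neighborSet z).ncard) +
                ((∑ z ∈ K.toFinite.toFinset, if z ∈ e₁ then 1 else 0) +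
                 ((∑ z ∈ K.toFinite.toFinset, if z ∈ e₂ then 1 else 0) +
                  (∑ z ∈ K.toFinite.toFinset, if z ∈ g then 1 else 0))) := by
              rw [Finset.sum_add_distrib, Finset.sum_add_distrib, Finset.sum_add_distrib]
          _ ≤ _ := by
              have t1 := sum_ite_mem_le_one (K.toFinite.toFinset) e₁
                (fun x hx hxe y hy hye =>
                  hu1 x ((Set.Finite.mem_toFinset _).mp hx) hxe y
                    ((Set.Finite.mem_toFinset _).mp hy) hye)
              have t2 := sum_ite_mem_le_one (K.toFinite.toFinset) e₂
                (fun x hx hxe y hy hye =>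
                  hu2 x ((Set.Finite.mem_toFinset _).mp hx) hxe y
                    ((Set.Finite.mem_toFinset _).mp hy) hye)
              have t3 := sum_ite_mem_le_two (K.toFinite.toFinset) b c
              rw [← hg] at t3
              omega
      have hdegE₂ : 2 * (K.ncard - 1) < ∑ z ∈ K.toFinite.toFinset, (G₂.neighborSet z).ncard := by
        omega
      obtain ⟨r₂, C₂, hC₂, hC₂K⟩ := exists_cycle_of_degree G₂ K hKne hcl₂ hconn₂ hdegE₂
      have hle₂ : G₂ ≤ U.graph := SimpleGraph.deleteEdges_le _
      have hCc₂ : (C₂.mapLe hle₂).IsCycle := hC₂.mapLe _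
      have hCsupp₂ : ∀ v ∈ (C₂.mapLe hle₂).support, v ∈ K := by
        intro v hv; rw [mapLe_support] at hv; exact hC₂K v hv
      have hCnD₂ : ∀ d ∈ (C₂.mapLe hle₂).edges, d ∉ D₂ := by
        intro d hd; rw [mapLe_edges] at hd
        have hmem := C₂.edges_subset_edgeSet hd
        rw [hG₂def, SimpleGraph.edgeSet_deleteEdges] at hmem
        exact hmem.2
      have hCD₂ : ∀ d ∈ (C₂.mapLe hle₂).edges, d ≠ e₁ ∧ d ≠ e₂ := by
        intro d hd
        have := hCnD₂ d hd
        constructor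
        · intro h; exact this (by simp [hD₂, h])
        · intro h; exact this (by simp [hD₂, h])
      rcases Net.cut_from_cycle U h2 e₁ e₂ K hclU hu1 hu2 (C₂.mapLe hle₂) hCc₂ hCsupp₂ hCD₂ with
        hinner | ⟨b', c', hb'K, hc'K, hb'e₁, hc'e₂, hg'C⟩
      · obtain ⟨f, hfcut, hf1, hf2, hfK⟩ := hinner
        exact Net.step5 U hU.1 e₁ e₂ K hmid f hfcut hf1 hf2 hfK IH'
      · have hb' : b' = b := hu1 b' hb'K hb'e₁ b hbK hbe₁
        have hc' : c' = c := hu2 c' hc'K hc'e₂ c hcK hce₂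
        have : s(b', c') ∈ D₂ := by rw [hb', hc']; simp [hD₂, hg]
        exact hCnD₂ _ hg'C this
    · -- β: without g, b and c are separated; recurse into b's side
      set T : Set V := {z | (U.graph.deleteEdges {e₁, g}).Reachable z b} with hTdef
      have hmono : ∀ z, (U.graph.deleteEdges {e₁, g}).Reachable b z → G₂.Reachable b z := by
        apply reach_delete_mono (G := U.graph) (D₁ := {e₁, g}) (D₂ := D₂)
        · intro d hd; rcases hd with rfl | rfl <;> simp [hD₂]
        · intro d hd hd1 x hx hreach
          rcases hd with rfl | rfl | rfl
          · exact hd1 (by simp)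
          · -- d = e₂ : endpoints of e₂ are not reachable from b in G₂
            have hxK : x ∈ K := (hKdef x).mpr
              ((hreach.symm.mono (SimpleGraph.deleteEdges_anti hsub_pair₂)).trans
                ((hKdef b).mp hbK))
            have hxc : x = c := hu2 x hxK hx c hcK hce₂
            exact hα (hxc ▸ hreach)
          · exact hd1 (by simp)
      have hTsub : ∀ z ∈ T, G₂.Reachable b z := fun z hz => hmono z hz.symm
      have hTK : T ⊆ K := by
        intro z hz
        exact (hKdef z).mpr (((hTsub z hz).symm.mono
          (SimpleGraph.deleteEdges_anti hsub_pair₂)).trans ((hKdef b).mp hbK))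
      have hcT : c ∉ T := fun hcT => hα (hTsub c hcT)
      have hmidT : U.MidClass e₁ g T := by
        refine ⟨⟨b, SimpleGraph.Reachable.refl _, hKverts b hbK, fun z => Iff.rfl⟩,
          fun z hz => hleaf z (hTK hz), ?_, ?_⟩
        · intro x hxT hxe y hyT hye
          exact hu1 x (hTK hxT) hxe y (hTK hyT) hye
        · intro x hxT hxg y hyT hyg
          rw [hg] at hxg hyg
          rcases Sym2.mem_iff.mp hxg with rfl | rfl
          · rcases Sym2.mem_iff.mp hyg with rfl | rfl
            · rfl
            · exact absurd hyT hcT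
          · exact absurd hxT hcT
      have hss : T ⊂ K := ⟨hTK, fun hKT => hcT (hKT hcK)⟩
      exact IH' T.ncard (Set.ncard_lt_ncard hss (Set.toFinite K)) e₁ g T hmidT rfl

end Net


variable {V : Type}

open SimpleGraph

namespace Net

lemma InducesSplit.swap {N : Net V} {X : Set V} {e : Sym2 V} {A B : Set V}
    (h : N.InducesSplit X e A B) : N.InducesSplit X e B A := by
  obtain ⟨h1, h2, h3, h4, h5⟩ := h
  refine ⟨h2, h1, by rwa [Set.inter_comm], by rwa [Set.union_comm], ?_⟩
  intro x hx y hy P hP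
  have := h5 y hy x hx P.reverse hP.reverse
  rwa [SimpleGraph.Walk.edges_reverse, List.mem_reverse] at this

lemma split_no_reach {U : Net V} {X : Set V} {e : Sym2 V} {A B : Set V}
    (hs : U.InducesSplit X e A B) {x y : V} (hx : x ∈ A) (hy : y ∈ B) :
    ¬ (U.graph.deleteEdges {e}).Reachable x y := by
  classical
  intro h
  obtain ⟨p⟩ := h
  set p' := p.mapLe (SimpleGraph.deleteEdges_le ({e} : Set (Sym2 V))) with hp'
  have hP := p'.bypass_isPath
  have he := hs.2.2.2.2 x hx y hy p'.bypass hP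
  have hsub := p'.edges_bypass_subset he
  rw [hp', mapLe_edges] at hsub
  have hmem := p.edges_subset_edgeSet hsub
  rw [SimpleGraph.edgeSet_deleteEdges] at hmem
  exact hmem.2 rfl

lemma orient (U : Net V) (hconn : U.ConnectedOn) {X : Set V} {e : Sym2 V} {A B : Set V}
    (hs : U.InducesSplit X e A B) (heE : e ∈ U.graph.edgeSet)
    {x y : V} (hxA : x ∈ A) (hyB : y ∈ B) (hxv : x ∈ U.verts) (hyv : y ∈ U.verts) :
    ∃ a b, e = s(a, b) ∧ (U.graph.deleteEdges {e}).Reachable x a ∧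
      (U.graph.deleteEdges {e}).Reachable y b := by
  obtain ⟨a₀, b₀, hrep⟩ : ∃ a b, e = s(a, b) := by
    obtain ⟨q, hq⟩ := Sym2.mem_iff_exists.mp (Sym2.out_fst_mem e)
    exact ⟨e.out.1, q, hq⟩
  have hab_adj : U.graph.Adj a₀ b₀ := (SimpleGraph.mem_edgeSet _).mp (hrep ▸ heE)
  have ha₀v : a₀ ∈ U.verts := (U.support hab_adj).1
  have hend : ∀ z ∈ U.verts, ∃ w, w ∈ e ∧ (U.graph.deleteEdges {e}).Reachable z w := by
    intro z hz
    obtain ⟨p⟩ := hconn.2 z hz a₀ ha₀v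
    rcases trim_weak (D := ({e} : Set (Sym2 V))) p with h | ⟨u, v, huv, _, hru⟩
    · exact ⟨a₀, hrep ▸ Sym2.mem_mk_left a₀ b₀, h⟩
    · rw [Set.mem_singleton_iff] at huv
      exact ⟨u, huv ▸ Sym2.mem_mk_left u v, hru⟩
  obtain ⟨wx, hwxe, hwx⟩ := hend x hxv
  obtain ⟨wy, hwye, hwy⟩ := hend y hyv
  rw [hrep] at hwxe hwye
  rcases Sym2.mem_iff.mp hwxe with rfl | rfl
  · -- x side is wx = a₀
    rcases Sym2.mem_iff.mp hwye with rfl | rfl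
    · exact absurd (hwx.trans hwy.symm) (Net.split_no_reach hs hxA hyB)
    · exact ⟨wx, wy, hrep, hwx, hwy⟩
  · rcases Sym2.mem_iff.mp hwye with rfl | rfl
    · exact ⟨wx, wy, hrep.trans Sym2.eq_swap, hwx, hwy⟩
    · exact absurd (hwx.trans hwy.symm) (Net.split_no_reach hs hxA hyB)

end Net


variable {V : Type}

open SimpleGraph

namespace Net

open scoped Classical in
lemma core [Fintype V] (U : Net V) (X : Set V) (hU : U.IsUBPN X) (h2 : U.QCuttable 2)
    (e e' : Sym2 V) (he : U.IsCutEdge e) (he' : U.IsCutEdge e') (hne : e ≠ e')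
    (A B : Set V) (hs : U.InducesSplit X e A B) (hs' : U.InducesSplit X e' A B) :
    False := by
  obtain ⟨x, hxA⟩ := hs.1
  obtain ⟨y, hyB⟩ := hs.2.1
  have hXleaves : U.leaves = X := hU.2.2
  have hABX : A ∪ B = X := hs.2.2.2.1
  have hxX : x ∈ X := hABX ▸ Or.inl hxA
  have hyX : y ∈ X := hABX ▸ Or.inr hyB
  have hxv : x ∈ U.verts := by rw [← hXleaves] at hxX; exact hxX.1
  have hyv : y ∈ U.verts := by rw [← hXleaves] at hyX; exact hyX.1
  obtain ⟨a, b, hab, hxa, hyb⟩ := Net.orient U hU.1 hs he.1 hxA hyB hxv hyv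
  obtain ⟨c, d, hcd, hxc, hyd⟩ := Net.orient U hU.1 hs' he'.1 hxA hyB hxv hyv
  have hnxy : ¬ (U.graph.deleteEdges {e}).Reachable x y := Net.split_no_reach hs hxA hyB
  have hnxy' : ¬ (U.graph.deleteEdges {e'}).Reachable x y := Net.split_no_reach hs' hxA hyB
  have hnxb : ¬ (U.graph.deleteEdges {e}).Reachable x b := fun h => hnxy (h.trans hyb.symm)
  have hnab : ¬ (U.graph.deleteEdges {e}).Reachable a b :=
    fun h => hnxy ((hxa.trans h).trans hyb.symm)
  have hnya : ¬ (U.graph.deleteEdges {e}).Reachable y a := fun h => hnxy (hxa.trans h.symm)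
  have hnxd : ¬ (U.graph.deleteEdges {e'}).Reachable x d := fun h => hnxy' (h.trans hyd.symm)
  have hncd : ¬ (U.graph.deleteEdges {e'}).Reachable c d :=
    fun h => hnxy' ((hxc.trans h).trans hyd.symm)
  have hnyc : ¬ (U.graph.deleteEdges {e'}).Reachable y c := fun h => hnxy' (hxc.trans h.symm)
  set D : Set (Sym2 V) := {e, e'} with hD
  have hsube : ({e} : Set (Sym2 V)) ⊆ D := by intro t ht; rw [Set.mem_singleton_iff] at ht; simp [hD, ht]
  have hsube' : ({e'} : Set (Sym2 V)) ⊆ D := by intro t ht; rw [Set.mem_singleton_iff] at ht; simp [hD, ht]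
  have hDe : ∀ {z w : V}, (U.graph.deleteEdges D).Reachable z w →
      (U.graph.deleteEdges {e}).Reachable z w :=
    fun h => h.mono (SimpleGraph.deleteEdges_anti hsube)
  have hDe' : ∀ {z w : V}, (U.graph.deleteEdges D).Reachable z w →
      (U.graph.deleteEdges {e'}).Reachable z w :=
    fun h => h.mono (SimpleGraph.deleteEdges_anti hsube')
  -- adjacency steps avoiding the other edge
  have hstep_e : (U.graph.deleteEdges {e'}).Adj a b := by
    rw [SimpleGraph.deleteEdges_adj]
    refine ⟨(SimpleGraph.mem_edgeSet _).mp (hab ▸ he.1), ?_⟩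
    rw [Set.mem_singleton_iff, ← hab]; exact hne
  have hstep_e' : (U.graph.deleteEdges {e}).Adj c d := by
    rw [SimpleGraph.deleteEdges_adj]
    refine ⟨(SimpleGraph.mem_edgeSet _).mp (hcd ▸ he'.1), ?_⟩
    rw [Set.mem_singleton_iff, ← hcd]; exact fun h => hne h.symm
  have hbv : b ∈ U.verts := (U.support ((SimpleGraph.mem_edgeSet _).mp (hab ▸ he.1))).2
  have hav : a ∈ U.verts := (U.support ((SimpleGraph.mem_edgeSet _).mp (hab ▸ he.1))).1
  -- get a path from x to y
  obtain ⟨p0⟩ := hU.1.2 x hxv y hyv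
  have hPpath : p0.bypass.IsPath := p0.bypass_isPath
  have hnd : p0.bypass.edges.Nodup := hPpath.edges_nodup
  rcases trim_strong (D := D) p0.bypass hnd with
    h0 | ⟨u₁, v₁, q₁, hA1, hD1, hm1, hr1, hsub1, hn1, hnd1⟩
  · exact hnxy (hDe h0)
  have hD1x : s(u₁, v₁) = e ∨ s(u₁, v₁) = e' := by simpa [hD] using hD1
  rcases trim_strong (D := D) q₁ hnd1 with
    h2' | ⟨u₂, v₂, q₂, hA2, hD2, hm2, hr2, hsub2, hn2, hnd2⟩
  · -- only one crossing: contradiction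
    rcases hD1x with h1 | h1
    · rcases Sym2.eq_iff.mp (h1.trans hab) with ⟨rfl, rfl⟩ | ⟨rfl, rfl⟩
      · exact hnxy' (((hDe' hr1).trans hstep_e.reachable).trans (hDe' h2'))
      · exact hnxb (hDe hr1)
    · rcases Sym2.eq_iff.mp (h1.trans hcd) with ⟨rfl, rfl⟩ | ⟨rfl, rfl⟩
      · exact hnxy (((hDe hr1).trans hstep_e'.reachable).trans (hDe h2'))
      · exact hnxd (hDe' hr1)
  have hD2x : s(u₂, v₂) = e ∨ s(u₂, v₂) = e' := by simpa [hD] using hD2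
  -- no third crossing
  rcases trim_strong (D := D) q₂ hnd2 with
    h3' | ⟨u₃, v₃, q₃, hA3, hD3, hm3, hr3, hsub3, hn3, hnd3⟩
  swap
  · have hD3x : s(u₃, v₃) = e ∨ s(u₃, v₃) = e' := by simpa [hD] using hD3
    have hd12 : s(u₁, v₁) ≠ s(u₂, v₂) := fun h => hn1 (h ▸ hm2)
    have hd13 : s(u₃, v₃) ≠ s(u₁, v₁) := fun h => hn1 (h.symm ▸ (hsub2 _ hm3))
    have hd23 : s(u₃, v₃) ≠ s(u₂, v₂) := fun h => hn2 (h.symm ▸ hm3)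
    rcases hD1x with h1 | h1 <;> rcases hD2x with h2 | h2 <;> rcases hD3x with h3 | h3
    · exact hd12 (h1.trans h2.symm)
    · exact hd12 (h1.trans h2.symm)
    · exact hd13 (h3.trans h1.symm)
    · exact hd23 (h3.trans h2.symm)
    · exact hd23 (h3.trans h2.symm)
    · exact hd13 (h3.trans h1.symm)
    · exact hd12 (h1.trans h2.symm)
    · exact hd12 (h1.trans h2.symm)
  -- two crossings, second reaches y
  have hd12 : s(u₁, v₁) ≠ s(u₂, v₂) := fun h => hn1 (h ▸ hm2)
  rcases hD1x with h1 | h1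
  · -- first crossing is e
    have h2x : s(u₂, v₂) = e' := by
      rcases hD2x with h2 | h2
      · exact absurd (h1.trans h2.symm) hd12
      · exact h2
    rcases Sym2.eq_iff.mp (h1.trans hab) with ⟨rfl, rfl⟩ | ⟨rfl, rfl⟩
    swap
    · exact hnxb (hDe hr1)
    rcases Sym2.eq_iff.mp (h2x.trans hcd) with ⟨rfl, rfl⟩ | ⟨rfl, rfl⟩
    swap
    · exact hnyc (hDe' h3').symm
    -- now u₁ = a, v₁ = b, u₂ = c, v₂ = d, and b reaches c avoiding both
    have hbc : (U.graph.deleteEdges D).Reachable v₁ u₂ := hr2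
    -- middle class based at b := v₁
    set K : Set V := {z | (U.graph.deleteEdges D).Reachable z v₁} with hK
    have hmid : U.MidClass e e' K := by
      refine ⟨⟨v₁, SimpleGraph.Reachable.refl _, hbv, fun z => Iff.rfl⟩, ?_, ?_, ?_⟩
      · intro z hz hzl
        have hzX : z ∈ X := hXleaves ▸ hzl
        rw [← hABX] at hzX
        rcases hzX with hzA | hzB
        · exact Net.split_no_reach hs hzA hyB ((hDe hz).trans hyb.symm)
        · exact Net.split_no_reach hs' hxA hzB
            ((hxc.trans (hDe' hbc).symm).trans (hDe' hz).symm)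
      · intro x₁ hx₁ hx₁e y₁ hy₁ hy₁e
        rw [hab] at hx₁e hy₁e
        have hnotA : ∀ w, w ∈ K → w ≠ u₁ := by
          intro w hw hwa
          exact hnab (hwa ▸ hDe hw)
        rcases Sym2.mem_iff.mp hx₁e with rfl | rfl
        · exact absurd rfl (hnotA _ hx₁)
        · rcases Sym2.mem_iff.mp hy₁e with rfl | rfl
          · exact absurd rfl (hnotA _ hy₁)
          · rfl
      · intro x₁ hx₁ hx₁e y₁ hy₁ hy₁e
        rw [hcd] at hx₁e hy₁e
        have hnotD : ∀ w, w ∈ K → w ≠ v₂ := by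
          intro w hw hwd
          exact hncd (hwd ▸ ((hDe' hbc).symm.trans (hDe' hw).symm))
        rcases Sym2.mem_iff.mp hx₁e with rfl | rfl
        · rcases Sym2.mem_iff.mp hy₁e with rfl | rfl
          · rfl
          · exact absurd rfl (hnotD _ hy₁)
        · exact absurd rfl (hnotD _ hx₁)
    exact Net.no_mid U X hU h2 K.ncard e e' K hmid rfl
  · -- first crossing is e'
    have h2x : s(u₂, v₂) = e := by
      rcases hD2x with h2 | h2
      · exact h2
      · exact absurd (h1.trans h2.symm) hd12
    rcases Sym2.eq_iff.mp (h1.trans hcd) with ⟨rfl, rfl⟩ | ⟨rfl, rfl⟩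
    swap
    · exact hnxd (hDe' hr1)
    rcases Sym2.eq_iff.mp (h2x.trans hab) with ⟨rfl, rfl⟩ | ⟨rfl, rfl⟩
    swap
    · exact hnya (hDe h3').symm
    -- now u₁ = c, v₁ = d, u₂ = a, v₂ = b, and d reaches a avoiding both
    have hda : (U.graph.deleteEdges D).Reachable v₁ u₂ := hr2
    have hpairswap : ({e', e} : Set (Sym2 V)) = D := (Set.pair_comm e' e)
    set K : Set V := {z | (U.graph.deleteEdges D).Reachable z u₂} with hK
    have hmid : U.MidClass e' e K := by
      refine ⟨⟨u₂, SimpleGraph.Reachable.refl _, hav, fun z => ?_⟩, ?_, ?_, ?_⟩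
      · rw [hpairswap]; exact Iff.rfl
      · intro z hz hzl
        have hzX : z ∈ X := hXleaves ▸ hzl
        rw [← hABX] at hzX
        rcases hzX with hzA | hzB
        · exact Net.split_no_reach hs' hzA hyB
            (((hDe' hz).trans (hDe' hda).symm).trans hyd.symm)
        · exact Net.split_no_reach hs hxA hzB (hxa.trans (hDe hz).symm)
      · intro x₁ hx₁ hx₁e y₁ hy₁ hy₁e
        rw [hcd] at hx₁e hy₁e
        have hnotC : ∀ w, w ∈ K → w ≠ u₁ := by
          intro w hw hwc
          exact hncd ((hwc ▸ hDe' hw).trans (hDe' hda).symm)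
        rcases Sym2.mem_iff.mp hx₁e with rfl | rfl
        · exact absurd rfl (hnotC _ hx₁)
        · rcases Sym2.mem_iff.mp hy₁e with rfl | rfl
          · exact absurd rfl (hnotC _ hy₁)
          · rfl
      · intro x₁ hx₁ hx₁e y₁ hy₁ hy₁e
        rw [hab] at hx₁e hy₁e
        have hnotB : ∀ w, w ∈ K → w ≠ v₂ := by
          intro w hw hwb
          exact hnab (hwb ▸ hDe hw).symm
        rcases Sym2.mem_iff.mp hx₁e with rfl | rfl
        · rcases Sym2.mem_iff.mp hy₁e with rfl | rfl
          · rfl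
          · exact absurd rfl (hnotB _ hy₁)
        · exact absurd rfl (hnotB _ hx₁)
    exact Net.no_mid U X hU h2 K.ncard e' e K hmid rfl

end Net

end StatementNineAux


/-- In a `2`-cuttable unrooted binary phylogenetic network on `X`,
distinct cut-edges induce distinct `X`-splits. -/
theorem twoCuttable_distinct_cutEdges_distinct_splits {V : Type} [Fintype V]
    (U : Net V) (X : Set V) (hU : U.IsUBPN X) (h2 : U.QCuttable 2)
    (e e' : Sym2 V) (he : U.IsCutEdge e) (he' : U.IsCutEdge e') (hne : e ≠ e')
    (X₁ X₂ Y₁ Y₂ : Set V)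
    (hs : U.InducesSplit X e X₁ X₂) (hs' : U.InducesSplit X e' Y₁ Y₂) :
    ¬ ((X₁ = Y₁ ∧ X₂ = Y₂) ∨ (X₁ = Y₂ ∧ X₂ = Y₁)) := by
  intro hor
  rcases hor with ⟨hy1, hy2⟩ | ⟨hy1, hy2⟩
  · exact Net.core U X hU h2 e e' he he' hne X₁ X₂ hs (by rw [hy1, hy2]; exact hs')
  · exact Net.core U X hU h2 e e' he he' hne X₁ X₂ hs (by rw [hy1, hy2]; exact hs'.swap)
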